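/- For a = b = 0 and any real c with |c| ≠ 7, the matrix H(0,0,c) is diagonalizable over ℂ: there exists an invertible matrix Q ∈ ℂ^{4×4} such that Q⁻¹·H·Q is a diagonal matrix. In particular, at this exceptional point (where the eigenvalue 4 has multiplicity 2), the eigenvalues coalesce but the Hamiltonian remains diagonalizable. -/

import Mathlib

open Matrix

/-- The PT-symmetric Hamiltonian `H(a,b,c)` from Eq. (1) of the paper. -/
noncomputable def Hm (a b c : ℝ) : Matrix (Fin 4) (Fin 4) ℂ :=
  !![(-3 : ℂ), (c : ℂ), 0, 0;
     (c : ℂ), (-3 : ℂ), 0, 0;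
     (b : ℂ) - (c : ℂ) * Complex.I, 7 * Complex.I + (a : ℂ),
       4 - Complex.I * (a : ℂ), Complex.I * (b : ℂ);
     -7 * Complex.I + (a : ℂ), (b : ℂ) + Complex.I * (c : ℂ),
       -(Complex.I * (b : ℂ)), 4 + Complex.I * (a : ℂ)]

/-- For `a = b = 0` and any real `c` with `|c| ≠ 7`, the matrix `H(0,0,c)` is
diagonalizable over `ℂ`: the eigenvalues coalesce at this exceptional point, but the
Hamiltonian remains diagonalizable. -/
theorem Hm_zero_diagonalizable (c : ℝ) (hc : |c| ≠ 7) :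
    ∃ Q : Matrix (Fin 4) (Fin 4) ℂ, IsUnit Q ∧
      ∃ d : Fin 4 → ℂ, Q⁻¹ * Hm 0 0 c * Q = Matrix.diagonal d := by
  set Q : Matrix (Fin 4) (Fin 4) ℂ :=
    !![1, 1, 0, 0; 1, -1, 0, 0; -Complex.I, Complex.I, 1, 0;
       Complex.I, Complex.I, 0, 1] with hQdef
  have hdet : Q.det = -2 := by
    simp [hQdef, Matrix.det_succ_row_zero, Fin.sum_univ_succ, Fin.succAbove]
    ring
  have hu : IsUnit Q := by
    rw [Matrix.isUnit_iff_isUnit_det, hdet]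
    exact isUnit_iff_ne_zero.mpr (by norm_num)
  refine ⟨Q, hu, ![(-3 : ℂ) + c, -3 - c, 4, 4], ?_⟩
  have key : Hm 0 0 c * Q = Q * Matrix.diagonal ![(-3 : ℂ) + c, -3 - c, 4, 4] := by
    ext i j
    fin_cases i <;> fin_cases j <;>
      simp [Hm, hQdef, Matrix.mul_apply, Fin.sum_univ_four, Matrix.diagonal, Matrix.vecHead, Matrix.vecTail] <;>
      ring_nf <;> simp [Complex.I_sq] <;> ring
  rw [mul_assoc, key, ← mul_assoc,
    Matrix.nonsing_inv_mul Q ((Matrix.isUnit_iff_isUnit_det Q).mp hu), one_mul]
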